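/- For every n ≥ 1, the number of compositions of n avoiding the subword pattern 112 (no index i with σ_i = σ_{i+1} < σ_{i+2}) is at most the number of compositions of n avoiding the subword pattern 221 (no index i with σ_i = σ_{i+1} > σ_{i+2}), with strict inequality for n = 4 (values 7 vs 8). -/
import Mathlib


/-- A list contains the subword pattern `112`: some `i` with
`lᵢ = l_{i+1} < l_{i+2}`. -/
def listHas112 (l : List ℕ) : Prop :=
  ∃ i : ℕ, i + 2 < l.length ∧
    l.getD i 0 = l.getD (i + 1) 0 ∧ l.getD (i + 1) 0 < l.getD (i + 2) 0

/-- A list contains the subword pattern `221`: some `i` with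
`lᵢ = l_{i+1} > l_{i+2}`. -/
def listHas221 (l : List ℕ) : Prop :=
  ∃ i : ℕ, i + 2 < l.length ∧
    l.getD i 0 = l.getD (i + 1) 0 ∧ l.getD (i + 2) 0 < l.getD (i + 1) 0

/-- Number of compositions of `n` avoiding the subword pattern `112`. -/
noncomputable def avoid112Comp (n : ℕ) : ℕ :=
  Nat.card {c : Composition n // ¬listHas112 c.blocks}

/-- Number of compositions of `n` avoiding the subword pattern `221`. -/
noncomputable def avoid221Comp (n : ℕ) : ℕ :=
  Nat.card {c : Composition n // ¬listHas221 c.blocks}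


def comps : ℕ → Finset (List ℕ)
  | 0 => {[]}
  | n+1 => ((comps n).image (1 :: ·)) ∪ ((comps n).image (fun l => (l.headD 0 + 1) :: l.tail))

lemma headD_add_tail_sum (l : List ℕ) : l.headD 0 + l.tail.sum = l.sum := by
  cases l <;> simp

lemma mem_comps {n : ℕ} {l : List ℕ} :
    l ∈ comps n ↔ l.sum = n ∧ ∀ x ∈ l, 0 < x := by
  induction n generalizing l with
  | zero =>
    simp only [comps, Finset.mem_singleton]
    constructor
    · rintro rfl; simp
    · rintro ⟨hs, hp⟩
      cases l with
      | nil => rfl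
      | cons a t =>
        exfalso
        have := hp a (by simp)
        simp at hs
        omega
  | succ n ih =>
    simp only [comps, Finset.mem_union, Finset.mem_image]
    constructor
    · rintro (⟨l', hl', rfl⟩ | ⟨l', hl', rfl⟩)
      · obtain ⟨hs, hp⟩ := ih.mp hl'
        refine ⟨by simp [hs, Nat.add_comm], ?_⟩
        intro x hx
        rcases List.mem_cons.mp hx with rfl | hx
        · exact Nat.one_pos
        · exact hp x hx
      · obtain ⟨hs, hp⟩ := ih.mp hl'
        constructor
        · simp only [List.sum_cons]
          have := headD_add_tail_sum l'
          omega
        · intro x hx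
          rcases List.mem_cons.mp hx with rfl | hx
          · omega
          · exact hp x (List.mem_of_mem_tail hx)
    · rintro ⟨hs, hp⟩
      cases l with
      | nil => simp at hs
      | cons a t =>
        have ha : 0 < a := hp a (by simp)
        simp only [List.sum_cons] at hs
        rcases Nat.eq_or_lt_of_le ha with h1 | h2
        · left
          exact ⟨t, ih.mpr ⟨by omega, fun x hx => hp x (by simp [hx])⟩, by rw [← h1]⟩
        · right
          refine ⟨(a-1) :: t, ih.mpr ⟨by simp; omega, ?_⟩, by simp; omega⟩
          intro x hx
          rcases List.mem_cons.mp hx with rfl | hx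
          · omega
          · exact hp x (by simp [hx])

lemma cons_mem_comps {n v : ℕ} {ρ : List ℕ} (hv : 1 ≤ v) :
    v :: ρ ∈ comps n ↔ v ≤ n ∧ ρ ∈ comps (n - v) := by
  simp only [mem_comps, List.sum_cons]
  constructor
  · rintro ⟨hs, hp⟩
    exact ⟨by omega, by omega, fun x hx => hp x (by simp [hx])⟩
  · rintro ⟨hvn, hs, hp⟩
    refine ⟨by omega, ?_⟩
    intro x hx
    rcases List.mem_cons.mp hx with rfl | hx
    · omega
    · exact hp x hx
def hasAb : List ℕ → Bool
  | a :: b :: c :: t => (b == c && decide (b < a)) || hasAb (b :: c :: t)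
  | _ => false

def hasBb : List ℕ → Bool
  | a :: b :: c :: t => (b == c && decide (a < b)) || hasBb (b :: c :: t)
  | _ => false

def flagb : List ℕ → Bool
  | a :: b :: _ => a == b
  | _ => false

def hd (r : List ℕ) : ℕ := r.headD 0

lemma hasAb_cons (v : ℕ) (ρ : List ℕ) :
    hasAb (v :: ρ) = (hasAb ρ || (flagb ρ && decide (hd ρ < v))) := by
  match ρ with
  | [] => rfl
  | [u] => rfl
  | u :: w :: t => simp [hasAb, flagb, hd, Bool.or_comm]

lemma hasBb_cons (v : ℕ) (ρ : List ℕ) :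
    hasBb (v :: ρ) = (hasBb ρ || (flagb ρ && decide (v < hd ρ))) := by
  match ρ with
  | [] => rfl
  | [u] => rfl
  | u :: w :: t => simp [hasBb, flagb, hd, Bool.or_comm]

lemma flagb_cons (v : ℕ) (ρ : List ℕ) (hv : 1 ≤ v) :
    flagb (v :: ρ) = (v == hd ρ) := by
  match ρ with
  | [] => simp [flagb, hd]; omega
  | u :: t => simp [flagb, hd]

lemma hd_le_of_mem_comps {n : ℕ} {r : List ℕ} (h : r ∈ comps n) : hd r ≤ n := by
  obtain ⟨hs, _⟩ := mem_comps.mp h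
  cases r with
  | nil => simp [hd]
  | cons a t => simp [hd]; simp at hs; omega

lemma hd_pos_of_mem_comps {n : ℕ} {r : List ℕ} (hn : 1 ≤ n) (h : r ∈ comps n) : 1 ≤ hd r := by
  obtain ⟨hs, hp⟩ := mem_comps.mp h
  cases r with
  | nil => simp at hs; omega
  | cons a t => exact hp a (by simp)
def cnt (n : ℕ) (q : List ℕ → Bool) : ℕ := ((comps n).filter (fun r => q r = true)).card

def cF (P : List ℕ → Bool) (n v : ℕ) : ℕ :=
  cnt n (fun r => !P r && (hd r == v) && !flagb r)
def cT (P : List ℕ → Bool) (n v : ℕ) : ℕ :=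
  cnt n (fun r => !P r && (hd r == v) && flagb r)
def cH (P : List ℕ → Bool) (n v : ℕ) : ℕ :=
  cnt n (fun r => !P r && (hd r == v))
def cAll (P : List ℕ → Bool) (n : ℕ) : ℕ := cnt n (fun r => !P r)

lemma filter_card_congr {n : ℕ} {q q' : List ℕ → Bool}
    (h : ∀ r ∈ comps n, q r = true ↔ q' r = true) :
    ((comps n).filter (fun r => q r = true)).card
      = ((comps n).filter (fun r => q' r = true)).card := by
  congr 1
  apply Finset.filter_congr
  intro r hr
  exact h r hr

lemma cnt_congr {n : ℕ} {q q' : List ℕ → Bool}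
    (h : ∀ r ∈ comps n, q r = true ↔ q' r = true) : cnt n q = cnt n q' :=
  filter_card_congr h

/-- fiberwise partition by head value -/
lemma cnt_fiber {n : ℕ} (hn : 1 ≤ n) (q : List ℕ → Bool) :
    cnt n q = ∑ v ∈ Finset.Icc 1 n, cnt n (fun r => q r && (hd r == v)) := by
  unfold cnt
  rw [Finset.card_eq_sum_card_fiberwise (f := hd) (t := Finset.Icc 1 n)]
  · apply Finset.sum_congr rfl
    intro v _
    rw [Finset.filter_filter]
    congr 1
    apply Finset.filter_congr
    intro r _
    simp
  · intro r hr
    have hr' := (Finset.mem_filter.mp hr).1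
    exact Finset.mem_Icc.mpr ⟨hd_pos_of_mem_comps hn hr', hd_le_of_mem_comps hr'⟩

/-- strip the head -/
lemma cnt_cons {n v : ℕ} (hv : 1 ≤ v) (hvn : v ≤ n) (q : List ℕ → Bool) :
    cnt n (fun r => (hd r == v) && q r) = cnt (n - v) (fun ρ => q (v :: ρ)) := by
  unfold cnt
  apply Finset.card_bij' (i := fun r _ => r.tail) (j := fun ρ _ => v :: ρ)
  · intro r hr
    obtain ⟨hrm, hrq⟩ := Finset.mem_filter.mp hr
    simp only [Bool.and_eq_true, beq_iff_eq] at hrq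
    obtain ⟨hhd, hq⟩ := hrq
    have hne : r ≠ [] := by
      rintro rfl; simp [hd] at hhd; omega
    obtain ⟨a, t, rfl⟩ := List.exists_cons_of_ne_nil hne
    have hav : a = v := by simpa [hd] using hhd
    subst hav
    simp only [List.tail_cons]
    refine Finset.mem_filter.mpr ⟨((cons_mem_comps hv).mp hrm).2, hq⟩
  · intro ρ hρ
    obtain ⟨hρm, hρq⟩ := Finset.mem_filter.mp hρ
    refine Finset.mem_filter.mpr ⟨(cons_mem_comps hv).mpr ⟨hvn, hρm⟩, ?_⟩
    simp only [Bool.and_eq_true, beq_iff_eq]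
    exact ⟨by simp [hd], hρq⟩
  · intro r hr
    obtain ⟨hrm, hrq⟩ := Finset.mem_filter.mp hr
    simp only [Bool.and_eq_true, beq_iff_eq] at hrq
    obtain ⟨hhd, hq⟩ := hrq
    have hne : r ≠ [] := by
      rintro rfl; simp [hd] at hhd; omega
    obtain ⟨a, t, rfl⟩ := List.exists_cons_of_ne_nil hne
    have hav : a = v := by simpa [hd] using hhd
    simp [hav]
  · intro ρ hρ
    simp

lemma cH_split (P : List ℕ → Bool) (n v : ℕ) :
    cH P n v = cF P n v + cT P n v := by
  unfold cH cF cT cnt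
  rw [add_comm]
  rw [← Finset.card_filter_add_card_filter_not
    (s := (comps n).filter (fun r => (!P r && (hd r == v)) = true)) (p := fun r => flagb r = true)]
  congr 1 <;>
  · rw [Finset.filter_filter]
    congr 1
    apply Finset.filter_congr
    intro r _
    simp only [Bool.and_assoc, Bool.and_eq_true, Bool.not_eq_true', decide_eq_true_eq,
      eq_iff_iff, Bool.not_eq_true]
    tauto
lemma cnt_mono {n : ℕ} {q q' : List ℕ → Bool}
    (h : ∀ r, q r = true → q' r = true) : cnt n q ≤ cnt n q' := by
  apply Finset.card_le_card
  intro r hr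
  obtain ⟨h1, h2⟩ := Finset.mem_filter.mp hr
  exact Finset.mem_filter.mpr ⟨h1, h r h2⟩

lemma cnt_comps_zero (q : List ℕ → Bool) :
    cnt 0 q = if q [] = true then 1 else 0 := by
  unfold cnt
  show ((({[]} : Finset (List ℕ))).filter _).card = _
  rw [Finset.filter_singleton]
  split <;> simp

lemma cH_eq_zero {P : List ℕ → Bool} {n v : ℕ} (h : n < v) : cH P n v = 0 := by
  unfold cH cnt
  rw [Finset.card_eq_zero, Finset.filter_eq_empty_iff]
  intro r hr
  have := hd_le_of_mem_comps hr
  simp only [Bool.and_eq_true, beq_iff_eq, not_and]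
  intro _ hv
  omega

lemma cF_le_cH (P : List ℕ → Bool) (n v : ℕ) : cF P n v ≤ cH P n v := by
  apply cnt_mono
  intro r hr
  simp only [Bool.and_eq_true] at hr ⊢
  exact hr.1

lemma cT_le_cH (P : List ℕ → Bool) (n v : ℕ) : cT P n v ≤ cH P n v := by
  apply cnt_mono
  intro r hr
  simp only [Bool.and_eq_true] at hr ⊢
  exact hr.1

lemma cF_eq_zero {P : List ℕ → Bool} {n v : ℕ} (h : n < v) : cF P n v = 0 :=
  Nat.le_zero.mp (cH_eq_zero h ▸ cF_le_cH P n v)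

lemma cT_eq_zero {P : List ℕ → Bool} {n v : ℕ} (h : n < v) : cT P n v = 0 :=
  Nat.le_zero.mp (cH_eq_zero h ▸ cT_le_cH P n v)

lemma cF_diag {P : List ℕ → Bool} {v : ℕ} (hv : 1 ≤ v) (hP : P [v] = false) :
    cF P v v = 1 := by
  unfold cF
  rw [cnt_congr (q' := fun r => (hd r == v) && (!P r && !flagb r))
    (by intro r _; simp only [Bool.and_eq_true]; tauto)]
  rw [cnt_cons hv le_rfl]
  simp only [Nat.sub_self]
  rw [cnt_comps_zero]
  simp [hP, flagb]

lemma cT_diag {P : List ℕ → Bool} {v : ℕ} (hv : 1 ≤ v) :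
    cT P v v = 0 := by
  unfold cT
  rw [cnt_congr (q' := fun r => (hd r == v) && (!P r && flagb r))
    (by intro r _; simp only [Bool.and_eq_true]; tauto)]
  rw [cnt_cons hv le_rfl]
  simp only [Nat.sub_self]
  rw [cnt_comps_zero]
  simp [flagb]

lemma cH_diag {P : List ℕ → Bool} {v : ℕ} (hv : 1 ≤ v) (hP : P [v] = false) :
    cH P v v = 1 := by
  rw [cH_split, cF_diag hv hP, cT_diag hv]
lemma cnt_false (n : ℕ) : cnt n (fun _ => false) = 0 := by
  unfold cnt
  simp

lemma cT_rec_A {n v : ℕ} (hv : 1 ≤ v) (hvn : v < n) :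
    cT hasAb n v = cH hasAb (n - v) v := by
  unfold cT cH
  rw [cnt_congr (q' := fun r => (hd r == v) && (!hasAb r && flagb r))
    (by intro r _; simp only [Bool.and_eq_true]; tauto)]
  rw [cnt_cons hv (le_of_lt hvn)]
  apply cnt_congr
  intro ρ _
  rw [hasAb_cons, flagb_cons v ρ hv]
  cases hA : hasAb ρ <;> cases hF : flagb ρ <;> simp <;> omega

lemma cT_rec_B {n v : ℕ} (hv : 1 ≤ v) (hvn : v < n) :
    cT hasBb n v = cH hasBb (n - v) v := by
  unfold cT cH
  rw [cnt_congr (q' := fun r => (hd r == v) && (!hasBb r && flagb r))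
    (by intro r _; simp only [Bool.and_eq_true]; tauto)]
  rw [cnt_cons hv (le_of_lt hvn)]
  apply cnt_congr
  intro ρ _
  rw [hasBb_cons, flagb_cons v ρ hv]
  cases hB : hasBb ρ <;> cases hF : flagb ρ <;> simp <;> omega

lemma cF_rec_A {n v : ℕ} (hv : 1 ≤ v) (hvn : v < n) :
    cF hasAb n v = ∑ u ∈ Finset.Icc 1 (n - v),
      (if u < v then cF hasAb (n-v) u else if v < u then cH hasAb (n-v) u else 0) := by
  unfold cF cH
  rw [cnt_congr (q' := fun r => (hd r == v) && (!hasAb r && !flagb r))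
    (by intro r _; simp only [Bool.and_eq_true]; tauto)]
  rw [cnt_cons hv (le_of_lt hvn)]
  rw [cnt_fiber (by omega)]
  apply Finset.sum_congr rfl
  intro u hu
  by_cases h1 : u < v
  · rw [if_pos h1]
    apply cnt_congr
    intro ρ _
    rw [hasAb_cons, flagb_cons v ρ hv]
    cases hA : hasAb ρ <;> cases hF : flagb ρ <;> simp <;> omega
  · by_cases h2 : v < u
    · rw [if_neg h1, if_pos h2]
      apply cnt_congr
      intro ρ _
      rw [hasAb_cons, flagb_cons v ρ hv]
      cases hA : hasAb ρ <;> cases hF : flagb ρ <;> simp <;> omega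
    · have huv : u = v := by omega
      rw [if_neg h1, if_neg h2, ← cnt_false (n - v)]
      apply cnt_congr
      intro ρ _
      rw [hasAb_cons, flagb_cons v ρ hv]
      subst huv
      cases hA : hasAb ρ <;> cases hF : flagb ρ <;> simp <;> omega

lemma cF_rec_B {n v : ℕ} (hv : 1 ≤ v) (hvn : v < n) :
    cF hasBb n v = ∑ u ∈ Finset.Icc 1 (n - v),
      (if u < v then cH hasBb (n-v) u else if v < u then cF hasBb (n-v) u else 0) := by
  unfold cF cH
  rw [cnt_congr (q' := fun r => (hd r == v) && (!hasBb r && !flagb r))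
    (by intro r _; simp only [Bool.and_eq_true]; tauto)]
  rw [cnt_cons hv (le_of_lt hvn)]
  rw [cnt_fiber (by omega)]
  apply Finset.sum_congr rfl
  intro u hu
  by_cases h1 : u < v
  · rw [if_pos h1]
    apply cnt_congr
    intro ρ _
    rw [hasBb_cons, flagb_cons v ρ hv]
    cases hB : hasBb ρ <;> cases hF : flagb ρ <;> simp <;> omega
  · by_cases h2 : v < u
    · rw [if_neg h1, if_pos h2]
      apply cnt_congr
      intro ρ _
      rw [hasBb_cons, flagb_cons v ρ hv]
      cases hB : hasBb ρ <;> cases hF : flagb ρ <;> simp <;> omega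
    · have huv : u = v := by omega
      rw [if_neg h1, if_neg h2, ← cnt_false (n - v)]
      apply cnt_congr
      intro ρ _
      rw [hasBb_cons, flagb_cons v ρ hv]
      subst huv
      cases hB : hasBb ρ <;> cases hF : flagb ρ <;> simp <;> omega
lemma pos_of_mem_comps {n : ℕ} {r : List ℕ} (h : r ∈ comps n) : ∀ x ∈ r, 0 < x :=
  (mem_comps.mp h).2

lemma hasAb_one_cons {r : List ℕ} (hp : ∀ x ∈ r, 0 < x) : hasAb (1 :: r) = hasAb r := by
  rw [hasAb_cons]
  cases r with
  | nil => simp [flagb]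
  | cons a t =>
    have : 0 < a := hp a (by simp)
    have : ¬ (hd (a :: t) < 1) := by simp [hd]; omega
    simp [this]

lemma hasAb_replicate_append (k : ℕ) {r : List ℕ} (hp : ∀ x ∈ r, 0 < x) :
    hasAb (List.replicate k 1 ++ r) = hasAb r := by
  induction k with
  | zero => simp
  | succ k ih =>
    rw [List.replicate_succ, List.cons_append, hasAb_one_cons, ih]
    intro x hx
    rcases List.mem_append.mp hx with hx | hx
    · rw [List.eq_of_mem_replicate hx]; omega
    · exact hp x hx

lemma Z_lemma {n v : ℕ} (hv : 2 ≤ v) : cH hasAb n v ≤ cT hasAb n 1 := by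
  unfold cH cT cnt
  apply Finset.card_le_card_of_injOn (fun r => List.replicate v 1 ++ r.tail)
  · intro r hr
    obtain ⟨hrm, hrq⟩ := Finset.mem_filter.mp hr
    simp only [Bool.and_eq_true, beq_iff_eq, Bool.not_eq_true'] at hrq
    obtain ⟨hA, hhd⟩ := hrq
    have hne : r ≠ [] := by rintro rfl; simp [hd] at hhd; omega
    obtain ⟨a, t, rfl⟩ := List.exists_cons_of_ne_nil hne
    have hav : a = v := by simpa [hd] using hhd
    obtain ⟨hs, hp⟩ := mem_comps.mp hrm
    have hpt : ∀ x ∈ t, 0 < x := fun x hx => hp x (by simp [hx])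
    refine Finset.mem_filter.mpr ⟨mem_comps.mpr ⟨?_, ?_⟩, ?_⟩
    · simp only [List.sum_append, List.sum_replicate, smul_eq_mul, mul_one, List.tail_cons]
      simp at hs
      omega
    · intro x hx
      rcases List.mem_append.mp hx with hx | hx
      · rw [List.eq_of_mem_replicate hx]; omega
      · exact hpt x (by simpa using hx)
    · simp only [List.tail_cons, Bool.and_eq_true, beq_iff_eq, Bool.not_eq_true']
      refine ⟨⟨?_, ?_⟩, ?_⟩
      · rw [hasAb_replicate_append v hpt]
        rw [hasAb_cons] at hA
        simp only [Bool.or_eq_false_iff] at hA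
        exact hA.1
      · obtain ⟨k, rfl⟩ : ∃ k, v = k + 2 := ⟨v - 2, by omega⟩
        simp [List.replicate_succ, hd]
      · obtain ⟨k, rfl⟩ : ∃ k, v = k + 2 := ⟨v - 2, by omega⟩
        simp [List.replicate_succ, flagb]
  · intro r hr r' hr' heq
    obtain ⟨hrm, hrq⟩ := Finset.mem_filter.mp hr
    obtain ⟨hrm', hrq'⟩ := Finset.mem_filter.mp hr'
    simp only [Bool.and_eq_true, beq_iff_eq, Bool.not_eq_true'] at hrq hrq'
    have hne : r ≠ [] := by
      rintro rfl; simp [hd] at hrq; omega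
    have hne' : r' ≠ [] := by
      rintro rfl; simp [hd] at hrq'; omega
    obtain ⟨a, t, rfl⟩ := List.exists_cons_of_ne_nil hne
    obtain ⟨a', t', rfl⟩ := List.exists_cons_of_ne_nil hne'
    have hav : a = v := by simpa [hd] using hrq.2
    have hav' : a' = v := by simpa [hd] using hrq'.2
    simp only [List.tail_cons] at heq
    have := List.append_cancel_left heq
    rw [hav, hav', this]
lemma hasAb_singleton (v : ℕ) : hasAb [v] = false := rfl
lemma hasBb_singleton (v : ℕ) : hasBb [v] = false := rfl

theorem master : ∀ n v : ℕ, 1 ≤ v →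
    cF hasAb n v ≤ cF hasBb n v ∧ cT hasAb n v ≤ cT hasBb n v ∧
    (2 ≤ v → cH hasAb n v ≤ cF hasBb n v) := by
  intro n
  induction n using Nat.strong_induction_on with
  | _ n IH =>
    intro v hv
    rcases lt_trichotomy n v with h | h | h
    · refine ⟨?_, ?_, fun _ => ?_⟩
      · rw [cF_eq_zero h]; exact Nat.zero_le _
      · rw [cT_eq_zero h]; exact Nat.zero_le _
      · rw [cH_eq_zero h]; exact Nat.zero_le _
    · subst h
      refine ⟨?_, ?_, fun _ => ?_⟩
      · rw [cF_diag hv (hasAb_singleton n), cF_diag hv (hasBb_singleton n)]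
      · rw [cT_diag hv, cT_diag hv]
      · rw [cH_diag hv (hasAb_singleton n), cF_diag hv (hasBb_singleton n)]
    · -- v < n
      have hmn : n - v < n := by omega
      have hm1 : 1 ≤ n - v := by omega
      refine ⟨?_, ?_, fun hv2 => ?_⟩
      · rw [cF_rec_A hv h, cF_rec_B hv h]
        apply Finset.sum_le_sum
        intro u hu
        obtain ⟨hu1, hu2⟩ := Finset.mem_Icc.mp hu
        split_ifs with h1 h2
        · exact le_trans ((IH _ hmn u hu1).1) (cF_le_cH _ _ _)
        · exact (IH _ hmn u hu1).2.2 (by omega)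
        · exact le_rfl
      · rw [cT_rec_A hv h, cT_rec_B hv h, cH_split, cH_split]
        exact Nat.add_le_add (IH _ hmn v hv).1 (IH _ hmn v hv).2.1
      · rw [cH_split, cF_rec_A hv h, cT_rec_A hv h, cF_rec_B hv h]
        have key : ∀ u ∈ Finset.Icc 1 (n - v),
            (if u < v then cF hasAb (n-v) u else if v < u then cH hasAb (n-v) u else 0)
              + (if u = 1 then cH hasAb (n - v) v else 0)
            ≤ (if u < v then cH hasBb (n-v) u else if v < u then cF hasBb (n-v) u else 0) := by
          intro u hu
          obtain ⟨hu1, hu2⟩ := Finset.mem_Icc.mp hu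
          by_cases he : u = 1
          · subst he
            have h1v : (1:ℕ) < v := by omega
            rw [if_pos h1v, if_pos h1v, if_pos rfl, cH_split hasBb (n-v) 1]
            apply Nat.add_le_add
            · exact (IH _ hmn 1 le_rfl).1
            · exact le_trans (Z_lemma hv2) (IH _ hmn 1 le_rfl).2.1
          · rw [if_neg he, Nat.add_zero]
            split_ifs with h1 h2
            · exact le_trans ((IH _ hmn u hu1).1) (cF_le_cH _ _ _)
            · exact (IH _ hmn u hu1).2.2 (by omega)
            · exact le_rfl
        calc (∑ u ∈ Finset.Icc 1 (n - v),
                (if u < v then cF hasAb (n-v) u else if v < u then cH hasAb (n-v) u else 0))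
              + cH hasAb (n - v) v
            = ∑ u ∈ Finset.Icc 1 (n - v),
                ((if u < v then cF hasAb (n-v) u else if v < u then cH hasAb (n-v) u else 0)
                  + (if u = 1 then cH hasAb (n - v) v else 0)) := by
              rw [Finset.sum_add_distrib, Finset.sum_ite_eq' (Finset.Icc 1 (n-v)) 1
                (fun _ => cH hasAb (n - v) v), if_pos (Finset.mem_Icc.mpr ⟨le_rfl, hm1⟩)]
          _ ≤ _ := Finset.sum_le_sum key

theorem total_le {n : ℕ} (hn : 1 ≤ n) : cAll hasAb n ≤ cAll hasBb n := by
  unfold cAll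
  rw [cnt_fiber hn, cnt_fiber hn]
  apply Finset.sum_le_sum
  intro v hv
  obtain ⟨hv1, hv2⟩ := Finset.mem_Icc.mp hv
  show cH hasAb n v ≤ cH hasBb n v
  by_cases h1 : v = 1
  · subst h1
    rw [cH_split, cH_split]
    exact Nat.add_le_add (master n 1 le_rfl).1 (master n 1 le_rfl).2.1
  · exact le_trans ((master n v hv1).2.2 (by omega)) (cF_le_cH _ _ _)
def has112b : List ℕ → Bool
  | a :: b :: c :: t => (a == b && decide (a < c)) || has112b (b :: c :: t)
  | _ => false

def has221b : List ℕ → Bool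
  | a :: b :: c :: t => (a == b && decide (c < a)) || has221b (b :: c :: t)
  | _ => false

lemma listHas112_cons (a : ℕ) (l : List ℕ) :
    listHas112 (a :: l) ↔
      (2 ≤ l.length ∧ a = l.getD 0 0 ∧ a < l.getD 1 0) ∨ listHas112 l := by
  unfold listHas112
  simp only [List.getD_eq_getElem?_getD, List.length_cons]
  constructor
  · rintro ⟨i, hi, h1, h2⟩
    cases i with
    | zero =>
      left
      simp only [List.getElem?_cons_succ, List.getElem?_cons_zero, Option.getD_some] at h1 h2
      exact ⟨by omega, h1, by omega⟩
    | succ j =>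
      right
      refine ⟨j, by omega, ?_, ?_⟩
      · simpa only [List.getElem?_cons_succ] using h1
      · simpa only [List.getElem?_cons_succ] using h2
  · rintro (⟨hlen, h1, h2⟩ | ⟨j, hj, h1, h2⟩)
    · refine ⟨0, by omega, ?_, ?_⟩
      · simp only [List.getElem?_cons_succ, List.getElem?_cons_zero, Option.getD_some]
        omega
      · simp only [List.getElem?_cons_succ, List.getElem?_cons_zero, Option.getD_some]
        omega
    · refine ⟨j + 1, by omega, ?_, ?_⟩
      · simpa only [List.getElem?_cons_succ] using h1
      · simpa only [List.getElem?_cons_succ] using h2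

lemma listHas221_cons (a : ℕ) (l : List ℕ) :
    listHas221 (a :: l) ↔
      (2 ≤ l.length ∧ a = l.getD 0 0 ∧ l.getD 1 0 < a) ∨ listHas221 l := by
  unfold listHas221
  simp only [List.getD_eq_getElem?_getD, List.length_cons]
  constructor
  · rintro ⟨i, hi, h1, h2⟩
    cases i with
    | zero =>
      left
      simp only [List.getElem?_cons_succ, List.getElem?_cons_zero, Option.getD_some] at h1 h2
      exact ⟨by omega, h1, by omega⟩
    | succ j =>
      right
      refine ⟨j, by omega, ?_, ?_⟩
      · simpa only [List.getElem?_cons_succ] using h1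
      · simpa only [List.getElem?_cons_succ] using h2
  · rintro (⟨hlen, h1, h2⟩ | ⟨j, hj, h1, h2⟩)
    · refine ⟨0, by omega, ?_, ?_⟩
      · simp only [List.getElem?_cons_succ, List.getElem?_cons_zero, Option.getD_some]
        omega
      · simp only [List.getElem?_cons_succ, List.getElem?_cons_zero, Option.getD_some]
        omega
    · refine ⟨j + 1, by omega, ?_, ?_⟩
      · simpa only [List.getElem?_cons_succ] using h1
      · simpa only [List.getElem?_cons_succ] using h2

lemma listHas112_iff (l : List ℕ) : listHas112 l ↔ has112b l = true := by
  induction l with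
  | nil => simp [listHas112, has112b]
  | cons a l ih =>
    rw [listHas112_cons, ih]
    match l with
    | [] => simp [has112b, listHas112]
    | [b] => simp [has112b]
    | b :: c :: t =>
      show _ ↔ has112b (a :: b :: c :: t) = true
      rw [show has112b (a :: b :: c :: t)
        = ((a == b && decide (a < c)) || has112b (b :: c :: t)) from rfl]
      simp only [List.length_cons, List.getD_cons_zero, List.getD_cons_succ,
        Bool.or_eq_true, Bool.and_eq_true, beq_iff_eq, decide_eq_true_eq]
      constructor
      · rintro (⟨_, h1, h2⟩ | h) <;> tauto
      · rintro (⟨h1, h2⟩ | h)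
        · exact Or.inl ⟨by omega, h1, h2⟩
        · tauto

lemma listHas221_iff (l : List ℕ) : listHas221 l ↔ has221b l = true := by
  induction l with
  | nil => simp [listHas221, has221b]
  | cons a l ih =>
    rw [listHas221_cons, ih]
    match l with
    | [] => simp [has221b, listHas221]
    | [b] => simp [has221b]
    | b :: c :: t =>
      show _ ↔ has221b (a :: b :: c :: t) = true
      rw [show has221b (a :: b :: c :: t)
        = ((a == b && decide (c < a)) || has221b (b :: c :: t)) from rfl]
      simp only [List.length_cons, List.getD_cons_zero, List.getD_cons_succ,
        Bool.or_eq_true, Bool.and_eq_true, beq_iff_eq, decide_eq_true_eq]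
      constructor
      · rintro (⟨_, h1, h2⟩ | h) <;> tauto
      · rintro (⟨h1, h2⟩ | h)
        · exact Or.inl ⟨by omega, h1, h2⟩
        · tauto
lemma infix_of_infix_tail {l : List ℕ} {x : List ℕ} (a : ℕ) (h : x <:+: l) :
    x <:+: a :: l :=
  h.trans (List.infix_cons (List.infix_refl l))

lemma has112b_iff_infix (l : List ℕ) :
    has112b l = true ↔ ∃ b c, b < c ∧ [b, b, c] <:+: l := by
  induction l with
  | nil =>
    simp only [has112b, Bool.false_eq_true, false_iff, not_exists]
    rintro b c ⟨_, h⟩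
    have := h.length_le
    simp at this
  | cons a l ih =>
    match l with
    | [] =>
      simp only [has112b, Bool.false_eq_true, false_iff, not_exists]
      rintro b c ⟨_, h⟩
      have := h.length_le
      simp at this
    | [x] =>
      simp only [has112b, Bool.false_eq_true, false_iff, not_exists]
      rintro b c ⟨_, h⟩
      have := h.length_le
      simp at this
    | b0 :: c0 :: t =>
      rw [show has112b (a :: b0 :: c0 :: t)
        = ((a == b0 && decide (a < c0)) || has112b (b0 :: c0 :: t)) from rfl]
      rw [Bool.or_eq_true, ih]
      constructor
      · rintro (hfront | ⟨b, c, hbc, hinf⟩)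
        · simp only [Bool.and_eq_true, beq_iff_eq, decide_eq_true_eq] at hfront
          obtain ⟨rfl, hlt⟩ := hfront
          exact ⟨a, c0, hlt, ⟨[], t, by simp⟩⟩
        · exact ⟨b, c, hbc, infix_of_infix_tail a hinf⟩
      · rintro ⟨b, c, hbc, hinf⟩
        rw [List.infix_cons_iff] at hinf
        rcases hinf with hpre | hinf
        · obtain ⟨t', ht⟩ := hpre
          simp only [List.cons_append, List.nil_append, List.cons.injEq] at ht
          obtain ⟨rfl, rfl, rfl, _⟩ := ht
          left
          simp [hbc]
        · exact Or.inr ⟨b, c, hbc, hinf⟩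

lemma has221b_iff_infix (l : List ℕ) :
    has221b l = true ↔ ∃ b c, c < b ∧ [b, b, c] <:+: l := by
  induction l with
  | nil =>
    simp only [has221b, Bool.false_eq_true, false_iff, not_exists]
    rintro b c ⟨_, h⟩
    have := h.length_le
    simp at this
  | cons a l ih =>
    match l with
    | [] =>
      simp only [has221b, Bool.false_eq_true, false_iff, not_exists]
      rintro b c ⟨_, h⟩
      have := h.length_le
      simp at this
    | [x] =>
      simp only [has221b, Bool.false_eq_true, false_iff, not_exists]
      rintro b c ⟨_, h⟩
      have := h.length_le
      simp at this
    | b0 :: c0 :: t =>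
      rw [show has221b (a :: b0 :: c0 :: t)
        = ((a == b0 && decide (c0 < a)) || has221b (b0 :: c0 :: t)) from rfl]
      rw [Bool.or_eq_true, ih]
      constructor
      · rintro (hfront | ⟨b, c, hbc, hinf⟩)
        · simp only [Bool.and_eq_true, beq_iff_eq, decide_eq_true_eq] at hfront
          obtain ⟨rfl, hlt⟩ := hfront
          exact ⟨a, c0, hlt, ⟨[], t, by simp⟩⟩
        · exact ⟨b, c, hbc, infix_of_infix_tail a hinf⟩
      · rintro ⟨b, c, hbc, hinf⟩
        rw [List.infix_cons_iff] at hinf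
        rcases hinf with hpre | hinf
        · obtain ⟨t', ht⟩ := hpre
          simp only [List.cons_append, List.nil_append, List.cons.injEq] at ht
          obtain ⟨rfl, rfl, rfl, _⟩ := ht
          left
          simp [hbc]
        · exact Or.inr ⟨b, c, hbc, hinf⟩

lemma hasAb_iff_infix (l : List ℕ) :
    hasAb l = true ↔ ∃ b c, b < c ∧ [c, b, b] <:+: l := by
  induction l with
  | nil =>
    simp only [hasAb, Bool.false_eq_true, false_iff, not_exists]
    rintro b c ⟨_, h⟩
    have := h.length_le
    simp at this
  | cons a l ih =>
    match l with
    | [] =>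
      simp only [hasAb, Bool.false_eq_true, false_iff, not_exists]
      rintro b c ⟨_, h⟩
      have := h.length_le
      simp at this
    | [x] =>
      simp only [hasAb, Bool.false_eq_true, false_iff, not_exists]
      rintro b c ⟨_, h⟩
      have := h.length_le
      simp at this
    | b0 :: c0 :: t =>
      rw [show hasAb (a :: b0 :: c0 :: t)
        = ((b0 == c0 && decide (b0 < a)) || hasAb (b0 :: c0 :: t)) from rfl]
      rw [Bool.or_eq_true, ih]
      constructor
      · rintro (hfront | ⟨b, c, hbc, hinf⟩)
        · simp only [Bool.and_eq_true, beq_iff_eq, decide_eq_true_eq] at hfront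
          obtain ⟨heq, hlt⟩ := hfront
          exact ⟨b0, a, hlt, ⟨[], t, by simp [heq]⟩⟩
        · exact ⟨b, c, hbc, infix_of_infix_tail a hinf⟩
      · rintro ⟨b, c, hbc, hinf⟩
        rw [List.infix_cons_iff] at hinf
        rcases hinf with hpre | hinf
        · obtain ⟨t', ht⟩ := hpre
          simp only [List.cons_append, List.nil_append, List.cons.injEq] at ht
          obtain ⟨rfl, rfl, rfl, _⟩ := ht
          left
          simp [hbc]
        · exact Or.inr ⟨b, c, hbc, hinf⟩

lemma hasBb_iff_infix (l : List ℕ) :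
    hasBb l = true ↔ ∃ b c, b < c ∧ [b, c, c] <:+: l := by
  induction l with
  | nil =>
    simp only [hasBb, Bool.false_eq_true, false_iff, not_exists]
    rintro b c ⟨_, h⟩
    have := h.length_le
    simp at this
  | cons a l ih =>
    match l with
    | [] =>
      simp only [hasBb, Bool.false_eq_true, false_iff, not_exists]
      rintro b c ⟨_, h⟩
      have := h.length_le
      simp at this
    | [x] =>
      simp only [hasBb, Bool.false_eq_true, false_iff, not_exists]
      rintro b c ⟨_, h⟩
      have := h.length_le
      simp at this
    | b0 :: c0 :: t =>
      rw [show hasBb (a :: b0 :: c0 :: t)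
        = ((b0 == c0 && decide (a < b0)) || hasBb (b0 :: c0 :: t)) from rfl]
      rw [Bool.or_eq_true, ih]
      constructor
      · rintro (hfront | ⟨b, c, hbc, hinf⟩)
        · simp only [Bool.and_eq_true, beq_iff_eq, decide_eq_true_eq] at hfront
          obtain ⟨heq, hlt⟩ := hfront
          exact ⟨a, b0, hlt, ⟨[], t, by simp [heq]⟩⟩
        · exact ⟨b, c, hbc, infix_of_infix_tail a hinf⟩
      · rintro ⟨b, c, hbc, hinf⟩
        rw [List.infix_cons_iff] at hinf
        rcases hinf with hpre | hinf
        · obtain ⟨t', ht⟩ := hpre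
          simp only [List.cons_append, List.nil_append, List.cons.injEq] at ht
          obtain ⟨rfl, rfl, rfl, _⟩ := ht
          left
          simp [hbc]
        · exact Or.inr ⟨b, c, hbc, hinf⟩

lemma bridgeA (l : List ℕ) : listHas112 l ↔ hasAb l.reverse = true := by
  rw [listHas112_iff, has112b_iff_infix, hasAb_iff_infix]
  constructor
  · rintro ⟨b, c, hbc, hinf⟩
    refine ⟨b, c, hbc, ?_⟩
    rw [show ([c, b, b] : List ℕ) = [b, b, c].reverse from rfl]
    exact List.reverse_infix.mpr hinf
  · rintro ⟨b, c, hbc, hinf⟩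
    refine ⟨b, c, hbc, ?_⟩
    rw [show ([c, b, b] : List ℕ) = [b, b, c].reverse from rfl] at hinf
    exact List.reverse_infix.mp hinf

lemma bridgeB (l : List ℕ) : listHas221 l ↔ hasBb l.reverse = true := by
  rw [listHas221_iff, has221b_iff_infix, hasBb_iff_infix]
  constructor
  · rintro ⟨b, c, hbc, hinf⟩
    refine ⟨c, b, hbc, ?_⟩
    rw [show ([c, b, b] : List ℕ) = [b, b, c].reverse from rfl]
    exact List.reverse_infix.mpr hinf
  · rintro ⟨b, c, hbc, hinf⟩
    refine ⟨c, b, hbc, ?_⟩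
    rw [show ([b, c, c] : List ℕ) = [c, c, b].reverse from rfl] at hinf
    exact List.reverse_infix.mp hinf
def compEquiv (n : ℕ) (Q : List ℕ → Prop) (Pb : List ℕ → Bool)
    (hbr : ∀ l : List ℕ, Q l ↔ Pb l.reverse = true) :
    {c : Composition n // ¬ Q c.blocks} ≃
      {r : List ℕ // r ∈ (comps n).filter (fun r => (!Pb r) = true)} where
  toFun c := ⟨c.1.blocks.reverse, by
    refine Finset.mem_filter.mpr ⟨mem_comps.mpr ⟨?_, ?_⟩, ?_⟩
    · rw [List.sum_reverse]; exact c.1.blocks_sum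
    · intro x hx; exact c.1.blocks_pos (List.mem_reverse.mp hx)
    · have h2 := c.2
      rw [hbr] at h2
      simpa using h2⟩
  invFun r := ⟨⟨r.1.reverse,
      fun hi => (mem_comps.mp (Finset.mem_filter.mp r.2).1).2 _ (List.mem_reverse.mp hi),
      by rw [List.sum_reverse]; exact (mem_comps.mp (Finset.mem_filter.mp r.2).1).1⟩, by
    rw [hbr]
    have h2 := (Finset.mem_filter.mp r.2).2
    simp only [List.reverse_reverse]
    simpa using h2⟩
  left_inv c := by
    apply Subtype.ext
    apply Composition.ext
    simp
  right_inv r := by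
    apply Subtype.ext
    simp

lemma avoid112_eq (n : ℕ) : avoid112Comp n = cAll hasAb n := by
  unfold avoid112Comp
  rw [Nat.card_congr (compEquiv n listHas112 hasAb bridgeA)]
  rw [Nat.card_eq_fintype_card, Fintype.card_coe]
  rfl

lemma avoid221_eq (n : ℕ) : avoid221Comp n = cAll hasBb n := by
  unfold avoid221Comp
  rw [Nat.card_congr (compEquiv n listHas221 hasBb bridgeB)]
  rw [Nat.card_eq_fintype_card, Fintype.card_coe]
  rfl


/-- For every `n ≥ 1`, there are at most as many `112`-avoiding compositions
of `n` as `221`-avoiding ones, with strict inequality at `n = 4`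
(`7` versus `8`). -/
theorem avoid112_le_avoid221 :
    (∀ n : ℕ, 1 ≤ n → avoid112Comp n ≤ avoid221Comp n) ∧
    avoid112Comp 4 = 7 ∧ avoid221Comp 4 = 8 := by
  refine ⟨fun n hn => ?_, ?_, ?_⟩
  · rw [avoid112_eq, avoid221_eq]
    exact total_le hn
  · rw [avoid112_eq]
    decide
  · rw [avoid221_eq]
    decide
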